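/- Let M_1, M_2 ∈ M_n(ℂ) be skewsymmetric matrices satisfying the critical point equations M_1 = 2 M_1 M_1* M_1 + M_1 M_2* M_2 + M_2 M_2* M_1 and M_2 = 2 M_2 M_2* M_2 + M_2 M_1* M_1 + M_1 M_1* M_2. Then the spectrum of the positive semidefinite matrix M_1* M_1 + M_2* M_2 is degenerate, i.e., it has a repeated eigenvalue (for n ≥ 2). -/

import Mathlib

open Matrix Complex

variable {n : ℕ}

lemma aux_dp_adj (M : Matrix (Fin n) (Fin n) ℂ) (u w : Fin n → ℂ) :
    star u ⬝ᵥ (Mᴴ *ᵥ w) = star (M *ᵥ u) ⬝ᵥ w := by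
  rw [Matrix.star_mulVec, Matrix.dotProduct_mulVec]

lemma aux_star_mulVec (N : Matrix (Fin n) (Fin n) ℂ) (v : Fin n → ℂ) :
    Nᵀ *ᵥ star v = star (Nᴴ *ᵥ v) := by
  funext i
  simp [Matrix.mulVec, dotProduct, Matrix.transpose_apply, Matrix.conjTranspose_apply,
    mul_comm]

lemma aux_dp_self (v : Fin n → ℂ) :
    star v ⬝ᵥ v = ((∑ i, Complex.normSq (v i) : ℝ) : ℂ) := by
  push_cast
  simp [dotProduct, Complex.normSq_eq_conj_mul_self]

lemma aux_dp_pos {v : Fin n → ℂ} (hv : v ≠ 0) :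
    0 < ∑ i, Complex.normSq (v i) := by
  refine lt_of_le_of_ne (Finset.sum_nonneg fun i _ => Complex.normSq_nonneg _) fun h => hv ?_
  funext i
  have := (Finset.sum_eq_zero_iff_of_nonneg
    (fun i _ => Complex.normSq_nonneg (v i))).mp h.symm i (Finset.mem_univ i)
  simpa [Complex.normSq_eq_zero] using this

lemma aux_span {A : Matrix (Fin n) (Fin n) ℂ}
    (H : ∀ c : ℂ, Module.finrank ℂ (Module.End.eigenspace (Matrix.toLin' A) c) ≤ 1)
    {c : ℂ} {x y : Fin n → ℂ} (hx : A *ᵥ x = c • x) (hy : A *ᵥ y = c • y) (hx0 : x ≠ 0) :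
    ∃ t : ℂ, y = t • x := by
  by_contra h
  push_neg at h
  have li : LinearIndependent ℂ ![y, x] :=
    linearIndependent_fin2.mpr ⟨hx0, fun a ha => h a ha.symm⟩
  set E := Module.End.eigenspace (Matrix.toLin' A) c with hE
  have hxE : x ∈ E := Module.End.mem_eigenspace_iff.mpr (by rw [Matrix.toLin'_apply]; exact hx)
  have hyE : y ∈ E := Module.End.mem_eigenspace_iff.mpr (by rw [Matrix.toLin'_apply]; exact hy)
  have li2 : LinearIndependent ℂ (![(⟨y, hyE⟩ : E), ⟨x, hxE⟩]) := by
    apply LinearIndependent.of_comp E.subtype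
    have : (E.subtype ∘ ![(⟨y, hyE⟩ : E), ⟨x, hxE⟩]) = ![y, x] := by
      funext i; fin_cases i <;> rfl
    rw [this]; exact li
  have := li2.fintype_card_le_finrank
  simp at this
  have h1 : Module.finrank ℂ E ≤ 1 := H c
  omega

lemma aux_comm {A B M : Matrix (Fin n) (Fin n) ℂ}
    (hH : Aᴴ = A) (hT : Aᵀ = B) (k : M * A + B * M = M) :
    A * (Mᴴ * M) = (Mᴴ * M) * A := by
  have hBH : Bᴴ = B := by
    ext i j
    rw [← hT]
    simp only [Matrix.conjTranspose_apply, Matrix.transpose_apply]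
    exact congrFun (congrFun hH j) i
  have f1 : B * M = M - M * A := eq_sub_of_add_eq' k
  have f2 : A * Mᴴ = Mᴴ - Mᴴ * B := by
    have := congrArg Matrix.conjTranspose k
    simp only [Matrix.conjTranspose_add, Matrix.conjTranspose_mul, hH, hBH] at this
    exact eq_sub_of_add_eq this
  calc A * (Mᴴ * M) = (A * Mᴴ) * M := by rw [Matrix.mul_assoc]
    _ = (Mᴴ - Mᴴ * B) * M := by rw [f2]
    _ = Mᴴ * M - Mᴴ * (B * M) := by noncomm_ring
    _ = Mᴴ * M - Mᴴ * (M - M * A) := by rw [f1]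
    _ = (Mᴴ * M) * A := by noncomm_ring

lemma aux_alpha {A : Matrix (Fin n) (Fin n) ℂ}
    (H : ∀ c : ℂ, Module.finrank ℂ (Module.End.eigenspace (Matrix.toLin' A) c) ≤ 1)
    {M : Matrix (Fin n) (Fin n) ℂ} (comm : A * (Mᴴ * M) = (Mᴴ * M) * A)
    {v : Fin n → ℂ} {lam : ℂ} (hv : v ≠ 0) (heig : A *ᵥ v = lam • v) :
    ∃ α : ℝ, 0 ≤ α ∧ (Mᴴ * M) *ᵥ v = (α : ℂ) • v := by
  have hx : A *ᵥ ((Mᴴ * M) *ᵥ v) = lam • ((Mᴴ * M) *ᵥ v) := by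
    rw [Matrix.mulVec_mulVec, comm, ← Matrix.mulVec_mulVec, heig, Matrix.mulVec_smul]
  obtain ⟨t, ht⟩ := aux_span H heig hx hv
  have h2 : star v ⬝ᵥ ((Mᴴ * M) *ᵥ v) = star (M *ᵥ v) ⬝ᵥ (M *ᵥ v) := by
    rw [← Matrix.mulVec_mulVec, aux_dp_adj]
  rw [ht] at h2
  rw [dotProduct_smul, smul_eq_mul, aux_dp_self v, aux_dp_self (M *ᵥ v)] at h2
  set a := ∑ i, Complex.normSq (v i) with ha
  set b := ∑ i, Complex.normSq ((M *ᵥ v) i) with hb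
  have hapos : 0 < a := aux_dp_pos hv
  have htv : t = ((b / a : ℝ) : ℂ) := by
    have : (a : ℂ) ≠ 0 := by
      simpa using ne_of_gt hapos
    rw [Complex.ofReal_div]
    field_simp
    linear_combination h2
  refine ⟨b / a, div_nonneg (Finset.sum_nonneg fun i _ => Complex.normSq_nonneg _) hapos.le, ?_⟩
  rw [ht, htv]

lemma aux_extract {A B M₁ M₂ : Matrix (Fin n) (Fin n) ℂ}
    (hA : A = M₁ᴴ * M₁ + M₂ᴴ * M₂)
    (hH : Aᴴ = A) (hT : Aᵀ = B)
    (k₁ : M₁ * A + B * M₁ = M₁) (k₂ : M₂ * A + B * M₂ = M₂)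
    (H : ∀ c : ℂ, Module.finrank ℂ (Module.End.eigenspace (Matrix.toLin' A) c) ≤ 1)
    {v : Fin n → ℂ} {lam : ℂ} (hv : v ≠ 0) (heig : A *ᵥ v = lam • v) :
    ∃ α₁ α₂ : ℝ, 0 ≤ α₁ ∧ 0 ≤ α₂ ∧ (M₁ᴴ * M₁) *ᵥ v = (α₁ : ℂ) • v ∧
      (M₂ᴴ * M₂) *ᵥ v = (α₂ : ℂ) • v ∧ lam = (α₁ : ℂ) + (α₂ : ℂ) := by
  obtain ⟨α₁, hα₁, he₁⟩ := aux_alpha H (aux_comm hH hT k₁) hv heig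
  obtain ⟨α₂, hα₂, he₂⟩ := aux_alpha H (aux_comm hH hT k₂) hv heig
  refine ⟨α₁, α₂, hα₁, hα₂, he₁, he₂, ?_⟩
  have hsum : ((α₁ : ℂ) + (α₂ : ℂ)) • v = lam • v := by
    rw [← heig, hA, Matrix.add_mulVec, he₁, he₂, add_smul]
  have := sub_eq_zero.mpr hsum
  rw [← sub_smul] at this
  rcases smul_eq_zero.mp this with h | h
  · exact (sub_eq_zero.mp h).symm
  · exact absurd h hv

lemma aux_ct (M : Matrix (Fin n) (Fin n) ℂ) : (Mᴴ)ᵀ = (Mᵀ)ᴴ := rfl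

lemma aux_symm {M : Matrix (Fin n) (Fin n) ℂ} (s : Mᵀ = -M) :
    (Mᴴ * M)ᵀ = M * Mᴴ := by
  rw [Matrix.transpose_mul, aux_ct, s]
  simp [Matrix.conjTranspose_neg]

lemma aux_f2 {A B M : Matrix (Fin n) (Fin n) ℂ}
    (hH : Aᴴ = A) (hT : Aᵀ = B) (k : M * A + B * M = M) :
    A * Mᴴ = Mᴴ - Mᴴ * B := by
  have hBH : Bᴴ = B := by
    ext i j
    rw [← hT]
    simp only [Matrix.conjTranspose_apply, Matrix.transpose_apply]
    exact congrFun (congrFun hH j) i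
  have := congrArg Matrix.conjTranspose k
  simp only [Matrix.conjTranspose_add, Matrix.conjTranspose_mul, hH, hBH] at this
  exact eq_sub_of_add_eq this

lemma aux_w {A B M₁ : Matrix (Fin n) (Fin n) ℂ}
    (hH : Aᴴ = A) (hT : Aᵀ = B)
    (k₁ : M₁ * A + B * M₁ = M₁)
    (s₁ : M₁ᵀ = -M₁)
    {v : Fin n → ℂ} {lam : ℂ} {α : ℝ}
    (heig : A *ᵥ v = lam • v) (hlr : star lam = lam)
    (hα : (M₁ᴴ * M₁) *ᵥ v = (α : ℂ) • v) :
    A *ᵥ (M₁ᴴ *ᵥ star v) = (1 - lam) • (M₁ᴴ *ᵥ star v) ∧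
    star (M₁ᴴ *ᵥ star v) ⬝ᵥ (M₁ᴴ *ᵥ star v) = (α : ℂ) * (star v ⬝ᵥ v) ∧
    (M₁ᴴ * M₁) *ᵥ (M₁ᴴ *ᵥ star v) = (α : ℂ) • (M₁ᴴ *ᵥ star v) ∧
    M₁ᴴ *ᵥ star (M₁ᴴ *ᵥ star v) = -((α : ℂ) • v) := by
  have hBv : B *ᵥ star v = lam • star v := by
    rw [← hT, aux_star_mulVec, hH, heig, star_smul, hlr]
  have hMMH : (M₁ * M₁ᴴ) *ᵥ star v = (α : ℂ) • star v := by
    rw [← aux_symm s₁, aux_star_mulVec,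
      show (M₁ᴴ * M₁)ᴴ = M₁ᴴ * M₁ by
        rw [Matrix.conjTranspose_mul, Matrix.conjTranspose_conjTranspose],
      hα, star_smul]
    congr 1
    simp [Complex.conj_ofReal]
  refine ⟨?_, ?_, ?_, ?_⟩
  · rw [Matrix.mulVec_mulVec, aux_f2 hH hT k₁, Matrix.sub_mulVec, ← Matrix.mulVec_mulVec,
      hBv, Matrix.mulVec_smul, sub_smul, one_smul]
  · calc star (M₁ᴴ *ᵥ star v) ⬝ᵥ (M₁ᴴ *ᵥ star v)
        = star (star v) ⬝ᵥ (M₁ᴴᴴ *ᵥ (M₁ᴴ *ᵥ star v)) :=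
          (aux_dp_adj M₁ᴴ (star v) _).symm
      _ = v ⬝ᵥ ((M₁ * M₁ᴴ) *ᵥ star v) := by
          rw [Matrix.conjTranspose_conjTranspose, star_star, Matrix.mulVec_mulVec]
      _ = (α : ℂ) * (star v ⬝ᵥ v) := by
          rw [hMMH, dotProduct_smul, smul_eq_mul, dotProduct_comm]
  · rw [Matrix.mulVec_mulVec, Matrix.mul_assoc, ← Matrix.mulVec_mulVec, hMMH,
      Matrix.mulVec_smul]
  · have hsw : star (M₁ᴴ *ᵥ star v) = -(M₁ *ᵥ v) := by
      rw [← aux_star_mulVec M₁ (star v), star_star, s₁, Matrix.neg_mulVec]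
    rw [hsw, Matrix.mulVec_neg, Matrix.mulVec_mulVec, hα]

lemma aux_cancel {v : Fin n → ℂ} (hv : v ≠ 0) {a b : ℂ} (h : a • v = b • v) : a = b := by
  have := sub_eq_zero.mpr h
  rw [← sub_smul] at this
  rcases smul_eq_zero.mp this with h' | h'
  · exact sub_eq_zero.mp h'
  · exact absurd h' hv

lemma aux_wne {w v : Fin n → ℂ} (hv : v ≠ 0) {α : ℝ} (hpos : 0 < α)
    (h : star w ⬝ᵥ w = (α : ℂ) * (star v ⬝ᵥ v)) : w ≠ 0 := by
  intro h0
  rw [h0, aux_dp_self v] at h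
  simp only [star_zero, zero_dotProduct] at h
  have : ((α : ℂ) * ((∑ i, Complex.normSq (v i) : ℝ) : ℂ)) ≠ 0 :=
    mul_ne_zero (by exact_mod_cast hpos.ne') (by exact_mod_cast (aux_dp_pos hv).ne')
  exact this h.symm

lemma aux_half {A B M₁ : Matrix (Fin n) (Fin n) ℂ}
    (hH : Aᴴ = A) (hT : Aᵀ = B)
    (k₁ : M₁ * A + B * M₁ = M₁) (s₁ : M₁ᵀ = -M₁)
    (H : ∀ c : ℂ, Module.finrank ℂ (Module.End.eigenspace (Matrix.toLin' A) c) ≤ 1)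
    {v : Fin n → ℂ} {lam : ℂ} {α : ℝ} (hv : v ≠ 0)
    (heig : A *ᵥ v = lam • v) (hlr : star lam = lam)
    (hα : (M₁ᴴ * M₁) *ᵥ v = (α : ℂ) • v) (hpos : 0 < α)
    (hhalf : 1 - lam = lam) : False := by
  obtain ⟨hw1, hw2, _, hw4⟩ := aux_w hH hT k₁ s₁ heig hlr hα
  have hw0 : M₁ᴴ *ᵥ star v ≠ 0 := aux_wne hv hpos hw2
  have heigw : A *ᵥ (M₁ᴴ *ᵥ star v) = lam • (M₁ᴴ *ᵥ star v) := by rw [hw1, hhalf]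
  obtain ⟨t, ht⟩ := aux_span H heig heigw hv
  have h1 : M₁ᴴ *ᵥ star (M₁ᴴ *ᵥ star v) = (star t * t) • v := by
    rw [ht, star_smul, Matrix.mulVec_smul, ht, smul_smul]
  rw [hw4] at h1
  rw [← neg_smul] at h1
  have h2 : -(α : ℂ) = star t * t := aux_cancel hv h1
  have h3 : (Complex.normSq t : ℂ) = -(α : ℂ) := by
    rw [Complex.normSq_eq_conj_mul_self, h2]
    rfl
  have h4 : (Complex.normSq t : ℝ) = -α := by exact_mod_cast h3
  nlinarith [Complex.normSq_nonneg t]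

lemma aux_both {A B M₁ M₂ : Matrix (Fin n) (Fin n) ℂ}
    (hA : A = M₁ᴴ * M₁ + M₂ᴴ * M₂)
    (hH : Aᴴ = A) (hT : Aᵀ = B)
    (k₁ : M₁ * A + B * M₁ = M₁) (k₂ : M₂ * A + B * M₂ = M₂)
    (s₁ : M₁ᵀ = -M₁) (s₂ : M₂ᵀ = -M₂)
    (H : ∀ c : ℂ, Module.finrank ℂ (Module.End.eigenspace (Matrix.toLin' A) c) ≤ 1)
    {v : Fin n → ℂ} {lam : ℂ} {α₁ α₂ : ℝ} (hv : v ≠ 0)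
    (heig : A *ᵥ v = lam • v) (hs : lam = (α₁ : ℂ) + (α₂ : ℂ))
    (hα₁ : (M₁ᴴ * M₁) *ᵥ v = (α₁ : ℂ) • v) (hα₂ : (M₂ᴴ * M₂) *ᵥ v = (α₂ : ℂ) • v)
    (pos₁ : 0 < α₁) (pos₂ : 0 < α₂) : False := by
  have hlr : star lam = lam := by
    rw [hs]
    simp [Complex.conj_ofReal]
  obtain ⟨ha1, hb1, hc1, _⟩ := aux_w hH hT k₁ s₁ heig hlr hα₁
  obtain ⟨ha2, hb2, hc2, _⟩ := aux_w hH hT k₂ s₂ heig hlr hα₂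
  have hw10 : M₁ᴴ *ᵥ star v ≠ 0 := aux_wne hv pos₁ hb1
  have hw20 : M₂ᴴ *ᵥ star v ≠ 0 := aux_wne hv pos₂ hb2
  obtain ⟨t, ht⟩ := aux_span H ha1 ha2 hw10
  -- (M₁ᴴM₁) *ᵥ w₂ two ways
  have w1 : (M₁ᴴ * M₁) *ᵥ (M₂ᴴ *ᵥ star v) = (α₁ : ℂ) • (M₂ᴴ *ᵥ star v) := by
    rw [ht, Matrix.mulVec_smul, hc1, smul_smul, smul_smul, mul_comm]
  have w2 : (M₁ᴴ * M₁) *ᵥ (M₂ᴴ *ᵥ star v) = ((1 - lam) - (α₂ : ℂ)) • (M₂ᴴ *ᵥ star v) := by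
    have := ha2
    rw [hA, Matrix.add_mulVec, hc2] at this
    rw [sub_smul, ← this]
    abel
  have heq : (α₁ : ℂ) = (1 - lam) - (α₂ : ℂ) := aux_cancel hw20 (w1.symm.trans w2)
  have hhalf : 1 - lam = lam := by rw [hs] at heq ⊢; linear_combination -heq
  exact aux_half hH hT k₁ s₁ H hv heig hlr hα₁ pos₁ hhalf

lemma aux_single {A B M₁ M₂ : Matrix (Fin n) (Fin n) ℂ}
    (hA : A = M₁ᴴ * M₁ + M₂ᴴ * M₂)
    (hH : Aᴴ = A) (hT : Aᵀ = B)
    (k₁ : M₁ * A + B * M₁ = M₁) (k₂ : M₂ * A + B * M₂ = M₂)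
    (s₁ : M₁ᵀ = -M₁) (s₂ : M₂ᵀ = -M₂)
    (H : ∀ c : ℂ, Module.finrank ℂ (Module.End.eigenspace (Matrix.toLin' A) c) ≤ 1)
    {v : Fin n → ℂ} {lam : ℂ} {α₁ : ℝ} (hv : v ≠ 0)
    (heig : A *ᵥ v = lam • v) (hs : lam = (α₁ : ℂ))
    (hα₁ : (M₁ᴴ * M₁) *ᵥ v = (α₁ : ℂ) • v)
    (pos₁ : 0 < α₁) : False := by
  have hlr : star lam = lam := by
    rw [hs]
    simp [Complex.conj_ofReal]
  obtain ⟨ha1, hb1, hc1, _⟩ := aux_w hH hT k₁ s₁ heig hlr hα₁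
  have hw10 : M₁ᴴ *ᵥ star v ≠ 0 := aux_wne hv pos₁ hb1
  obtain ⟨β₁, β₂, hβ₁, hβ₂, he₁, he₂, hesum⟩ := aux_extract hA hH hT k₁ k₂ H hw10 ha1
  have hβ₁α : (β₁ : ℂ) = (α₁ : ℂ) := aux_cancel hw10 (he₁.symm.trans hc1)
  rcases eq_or_lt_of_le hβ₂ with h0 | h0
  · -- β₂ = 0 : then 1 - lam = α₁ = lam
    have hhalf : 1 - lam = lam := by
      rw [hs]
      rw [hβ₁α, ← h0, hs] at hesum
      push_cast at hesum ⊢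
      linear_combination hesum
    exact aux_half hH hT k₁ s₁ H hv heig hlr hα₁ pos₁ hhalf
  · -- β₂ > 0 : both positive at eigenvector w₁
    have hesum' : 1 - lam = (α₁ : ℂ) + (β₂ : ℂ) := by rw [← hβ₁α]; exact hesum
    have he₁' : (M₁ᴴ * M₁) *ᵥ (M₁ᴴ *ᵥ star v) = (α₁ : ℂ) • (M₁ᴴ *ᵥ star v) := hc1
    exact aux_both hA hH hT k₁ k₂ s₁ s₂ H hw10 ha1 hesum' he₁' he₂ pos₁ h0

lemma aux_zero {A B M₁ M₂ : Matrix (Fin n) (Fin n) ℂ}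
    (hA : A = M₁ᴴ * M₁ + M₂ᴴ * M₂)
    (hH : Aᴴ = A) (hT : Aᵀ = B)
    (k₁ : M₁ * A + B * M₁ = M₁) (k₂ : M₂ * A + B * M₂ = M₂)
    (s₁ : M₁ᵀ = -M₁) (s₂ : M₂ᵀ = -M₂)
    (H : ∀ c : ℂ, Module.finrank ℂ (Module.End.eigenspace (Matrix.toLin' A) c) ≤ 1)
    {v : Fin n → ℂ} {lam : ℂ} (hv : v ≠ 0) (heig : A *ᵥ v = lam • v) : lam = 0 := by
  obtain ⟨α₁, α₂, h1, h2, he₁, he₂, hs⟩ := aux_extract hA hH hT k₁ k₂ H hv heig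
  rcases eq_or_lt_of_le h1 with p1 | p1
  · rcases eq_or_lt_of_le h2 with p2 | p2
    · rw [hs, ← p1, ← p2]; simp
    · have hA' : A = M₂ᴴ * M₂ + M₁ᴴ * M₁ := by rw [hA, add_comm]
      have hs' : lam = (α₂ : ℂ) := by rw [hs, ← p1]; simp
      exact (aux_single hA' hH hT k₂ k₁ s₂ s₁ H hv heig hs' he₂ p2).elim
  · rcases eq_or_lt_of_le h2 with p2 | p2
    · have hs' : lam = (α₁ : ℂ) := by rw [hs, ← p2]; simp
      exact (aux_single hA hH hT k₁ k₂ s₁ s₂ H hv heig hs' he₁ p1).elim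
    · exact (aux_both hA hH hT k₁ k₂ s₁ s₂ H hv heig hs he₁ he₂ p1 p2).elim

/-- For skewsymmetric `M₁, M₂` satisfying the critical point equations, the spectrum of
`M₁*M₁ + M₂*M₂` is degenerate: some eigenvalue has multiplicity at least `2` (for `n ≥ 2`). -/
theorem skew_critical_point_spectrum_degenerate (n : ℕ) (hn : 2 ≤ n)
    (M₁ M₂ : Matrix (Fin n) (Fin n) ℂ)
    (h₁ : M₁.transpose = -M₁) (h₂ : M₂.transpose = -M₂)
    (e₁ : M₁ = 2 • (M₁ * M₁.conjTranspose * M₁) + M₁ * M₂.conjTranspose * M₂ +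
        M₂ * M₂.conjTranspose * M₁)
    (e₂ : M₂ = 2 • (M₂ * M₂.conjTranspose * M₂) + M₂ * M₁.conjTranspose * M₁ +
        M₁ * M₁.conjTranspose * M₂) :
    ∃ c : ℂ, 2 ≤ Module.finrank ℂ
      (Module.End.eigenspace
        (Matrix.toLin' (M₁.conjTranspose * M₁ + M₂.conjTranspose * M₂)) c) := by
  by_contra hcon
  push_neg at hcon
  set A : Matrix (Fin n) (Fin n) ℂ := M₁ᴴ * M₁ + M₂ᴴ * M₂ with hAdef
  set B : Matrix (Fin n) (Fin n) ℂ := M₁ * M₁ᴴ + M₂ * M₂ᴴ with hBdef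
  have H : ∀ c : ℂ, Module.finrank ℂ (Module.End.eigenspace (Matrix.toLin' A) c) ≤ 1 :=
    fun c => Nat.lt_succ_iff.mp (hcon c)
  have hH : Aᴴ = A := by
    simp [hAdef, Matrix.conjTranspose_add, Matrix.conjTranspose_mul,
      Matrix.conjTranspose_conjTranspose]
  have hT : Aᵀ = B := by
    rw [hAdef, hBdef, Matrix.transpose_add, aux_symm h₁, aux_symm h₂]
  have k₁ : M₁ * A + B * M₁ = M₁ := by
    conv_rhs => rw [e₁]
    rw [hAdef, hBdef]
    noncomm_ring
  have k₂ : M₂ * A + B * M₂ = M₂ := by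
    conv_rhs => rw [e₂]
    rw [hAdef, hBdef]
    noncomm_ring
  have hermA : A.IsHermitian := hH
  have heval : ∀ i, hermA.eigenvalues i = 0 := by
    intro i
    have hvne : ⇑(hermA.eigenvectorBasis i) ≠ 0 := by
      intro h
      exact hermA.eigenvectorBasis.orthonormal.ne_zero i (by ext j; exact congrFun h j)
    have heig := hermA.mulVec_eigenvectorBasis i
    have heig' : A *ᵥ ⇑(hermA.eigenvectorBasis i) =
        ((hermA.eigenvalues i : ℝ) : ℂ) • ⇑(hermA.eigenvectorBasis i) := by
      rw [heig]
      funext j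
      simp [Complex.real_smul]
    have := aux_zero rfl hH hT k₁ k₂ h₁ h₂ H hvne heig'
    exact_mod_cast this
  have hA0 : A = 0 := by
    have hst := hermA.spectral_theorem
    have hd : Matrix.diagonal (RCLike.ofReal ∘ hermA.eigenvalues) =
        (0 : Matrix (Fin n) (Fin n) ℂ) := by
      have : (RCLike.ofReal ∘ hermA.eigenvalues : Fin n → ℂ) = (0 : Fin n → ℂ) := by
        funext i
        simp [heval i]
      rw [this]
      exact Matrix.diagonal_zero
    rw [hd, map_zero] at hst
    exact hst
  have htop : Module.End.eigenspace (Matrix.toLin' A) 0 = ⊤ := by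
    rw [Module.End.eigenspace_zero, hA0]
    simp
  have := H 0
  rw [htop] at this
  have hfr : Module.finrank ℂ (⊤ : Submodule ℂ (Fin n → ℂ)) = n := by
    simp
  omega
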